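/- arXiv:2012.14001 — 2 statements merged into one kernel-verified Lean document; each statement's English description precedes it below -/
import Mathlib

section
/- Let V_1, …, V_k be complex n × m matrices with Σ_{r=1}^k V_rᴴ * V_r = 1_m, and let Φ : Matrix n n ℂ → Matrix m m ℂ be Φ(a) = Σ_r V_rᴴ * a * V_r. If m₀ ∈ Matrix n n ℂ saturates the Schwarz inequality, i.e. Φ(m₀ᴴ * m₀) = Φ(m₀)ᴴ * Φ(m₀), then for every a ∈ Matrix n n ℂ the bimodule identities hold: Φ(m₀ᴴ * a) = Φ(m₀)ᴴ * Φ(a) and Φ(aᴴ * m₀) = Φ(a)ᴴ * Φ(m₀). -/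
open Matrix

open scoped ComplexOrder in
/-- Auxiliary: if a finite sum of `(W r)ᴴ * W r` is zero, each `W r` is zero. -/
lemma sum_conjTranspose_mul_self_eq_zero
    {n m k : ℕ} (W : Fin k → Matrix (Fin n) (Fin m) ℂ)
    (h : ∑ r, (W r)ᴴ * W r = 0) : ∀ r, W r = 0 := by
  set B : Matrix (Fin k × Fin n) (Fin m) ℂ := fun p j => W p.1 p.2 j with hB
  have hBB : Bᴴ * B = ∑ r, (W r)ᴴ * W r := by
    ext i j
    simp only [Matrix.mul_apply, Matrix.sum_apply, Matrix.conjTranspose_apply]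
    rw [Fintype.sum_prod_type]
  have hB0 : B = 0 := by
    rw [← Matrix.conjTranspose_mul_self_eq_zero, hBB, h]
  intro r
  ext i j
  exact congrFun (congrFun hB0 (r, i)) j

set_option maxHeartbeats 1000000 in
/-- If `m₀` saturates the Schwarz inequality for the unital completely positive map `Φ`,
then the bimodule identities `Φ(m₀ᴴ a) = Φ(m₀)ᴴ Φ(a)` and `Φ(aᴴ m₀) = Φ(a)ᴴ Φ(m₀)` hold. -/
theorem schwarz_saturation_imp_bimodule
    {n m k : ℕ} (V : Fin k → Matrix (Fin n) (Fin m) ℂ)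
    (hV : ∑ r, (V r)ᴴ * V r = 1)
    (m₀ : Matrix (Fin n) (Fin n) ℂ)
    (hsat : (∑ r, (V r)ᴴ * (m₀ᴴ * m₀) * V r) =
      (∑ r, (V r)ᴴ * m₀ * V r)ᴴ * (∑ r, (V r)ᴴ * m₀ * V r)) :
    ∀ a : Matrix (Fin n) (Fin n) ℂ,
      (∑ r, (V r)ᴴ * (m₀ᴴ * a) * V r) =
        (∑ r, (V r)ᴴ * m₀ * V r)ᴴ * (∑ r, (V r)ᴴ * a * V r) ∧
      (∑ r, (V r)ᴴ * (aᴴ * m₀) * V r) =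
        (∑ r, (V r)ᴴ * a * V r)ᴴ * (∑ r, (V r)ᴴ * m₀ * V r) := by
  set S : Matrix (Fin m) (Fin m) ℂ := ∑ r, (V r)ᴴ * m₀ * V r with hS
  clear_value S
  have hSH : Sᴴ = ∑ r, (V r)ᴴ * m₀ᴴ * V r := by
    rw [hS, Matrix.conjTranspose_sum]
    refine Finset.sum_congr rfl (fun r _ => ?_)
    simp [Matrix.conjTranspose_mul, Matrix.mul_assoc]
  -- Σ (W r)ᴴ W r = Φ(m₀ᴴ m₀) - Sᴴ S = 0 where W r = m₀ V r - V r S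
  have hsum : ∑ r, (m₀ * V r - V r * S)ᴴ * (m₀ * V r - V r * S) = 0 := by
    have expand : ∀ r : Fin k, (m₀ * V r - V r * S)ᴴ * (m₀ * V r - V r * S) =
        (V r)ᴴ * (m₀ᴴ * m₀) * V r - ((V r)ᴴ * m₀ᴴ * V r) * S
          - Sᴴ * ((V r)ᴴ * m₀ * V r) + Sᴴ * ((V r)ᴴ * V r) * S := by
      intro r
      simp only [Matrix.conjTranspose_sub, Matrix.conjTranspose_mul,
        Matrix.sub_mul, Matrix.mul_sub, Matrix.mul_assoc]
      abel
    rw [Finset.sum_congr rfl (fun r _ => expand r)]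
    rw [Finset.sum_add_distrib, Finset.sum_sub_distrib, Finset.sum_sub_distrib,
      ← Finset.sum_mul, ← Finset.mul_sum, ← hSH, ← hS]
    have h4 : ∑ r, Sᴴ * ((V r)ᴴ * V r) * S = Sᴴ * (∑ r, (V r)ᴴ * V r) * S := by
      rw [Matrix.mul_sum, Finset.sum_mul]
    rw [h4, hV, hsat]
    simp
  have hW0 : ∀ r, m₀ * V r - V r * S = 0 :=
    sum_conjTranspose_mul_self_eq_zero _ hsum
  have hWeq : ∀ r, m₀ * V r = V r * S := fun r => sub_eq_zero.mp (hW0 r)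
  have hWH : ∀ r, (V r)ᴴ * m₀ᴴ = Sᴴ * (V r)ᴴ := by
    intro r
    have := congrArg conjTranspose (hWeq r)
    simpa [Matrix.conjTranspose_mul] using this
  intro a
  constructor
  · calc ∑ r, (V r)ᴴ * (m₀ᴴ * a) * V r
        = ∑ r, Sᴴ * ((V r)ᴴ * a * V r) := by
          refine Finset.sum_congr rfl (fun r _ => ?_)
          have h1 : (V r)ᴴ * (m₀ᴴ * a) * V r = ((V r)ᴴ * m₀ᴴ) * (a * V r) := by
            simp only [Matrix.mul_assoc]
          rw [h1, hWH r]
          simp only [Matrix.mul_assoc]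
      _ = Sᴴ * ∑ r, (V r)ᴴ * a * V r := by rw [← Matrix.mul_sum]
  · calc ∑ r, (V r)ᴴ * (aᴴ * m₀) * V r
        = ∑ r, ((V r)ᴴ * aᴴ * V r) * S := by
          refine Finset.sum_congr rfl (fun r _ => ?_)
          have h1 : (V r)ᴴ * (aᴴ * m₀) * V r = (V r)ᴴ * aᴴ * (m₀ * V r) := by
            simp only [Matrix.mul_assoc]
          rw [h1, hWeq r]
          simp only [Matrix.mul_assoc]
      _ = (∑ r, (V r)ᴴ * a * V r)ᴴ * S := by
          rw [← Finset.sum_mul, Matrix.conjTranspose_sum]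
          congr 1
          refine Finset.sum_congr rfl (fun r _ => ?_)
          simp [Matrix.conjTranspose_mul, Matrix.mul_assoc]
end

section
/- Let V_1, …, V_k be complex n × m matrices with Σ_{r=1}^k V_rᴴ * V_r = 1_m, let Φ : Matrix n n ℂ → Matrix m m ℂ be Φ(a) = Σ_r V_rᴴ * a * V_r, and let Φ*(b) = Σ_r V_r * b * V_rᴴ be its trace-dual. Assume Φ*(1_m) = Σ_r V_r * V_rᴴ is positive definite. If c ∈ Matrix m m ℂ commutes with V_rᴴ * V_s for all r, s, then the matrix R(c) := Φ*(1)^{-1/2} * Φ*(c) * Φ*(1)^{-1/2} satisfies the recovery equation R(c) * V_r = V_r * c for every r, and consequently Φ(R(c)) = c. -/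
open Matrix
open scoped ComplexOrder

/-- The positive semidefinite square root of a positive semidefinite matrix
(the definition `Matrix.PosSemidef.sqrt` of the older Mathlib, removed since). -/
noncomputable def Matrix.PosSemidef.sqrt {n : Type*} [Fintype n] [DecidableEq n]
    {𝕜 : Type*} [RCLike 𝕜] {A : Matrix n n 𝕜} (hA : A.PosSemidef) : Matrix n n 𝕜 :=
  hA.1.eigenvectorUnitary.1 * diagonal ((↑) ∘ (√·) ∘ hA.1.eigenvalues) *
    (star hA.1.eigenvectorUnitary : Matrix n n 𝕜)

lemma psd_sqrt_mul_self {N : Type*} [Fintype N] [DecidableEq N]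
    {A : Matrix N N ℂ} (hA : A.PosSemidef) : hA.sqrt * hA.sqrt = A := by
  have hU2 : star hA.1.eigenvectorUnitary.1 * hA.1.eigenvectorUnitary.1 = 1 :=
    (Matrix.mem_unitaryGroup_iff').mp hA.1.eigenvectorUnitary.2
  have hspec := hA.1.spectral_theorem
  rw [Unitary.conjStarAlgAut_apply] at hspec
  have key : ∀ (U D' D : Matrix N N ℂ), star U * U = 1 → D' * D' = D →
      U * D' * star U * (U * D' * star U) = U * D * star U := by
    intro U D' D h1 h2
    rw [← h2]
    simp only [Matrix.mul_assoc]
    rw [← Matrix.mul_assoc (star U) U, h1, Matrix.one_mul]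
  conv_rhs => rw [hspec]
  unfold Matrix.PosSemidef.sqrt
  refine key _ _ _ hU2 ?_
  rw [diagonal_mul_diagonal]
  congr 1
  funext i
  simp only [Function.comp]
  rw [← RCLike.ofReal_mul, Real.mul_self_sqrt (hA.eigenvalues_nonneg i)]

/-- If a matrix commutes with `diagonal (coe ∘ d)`, it commutes with
`diagonal (coe ∘ f ∘ d)` for any `f`. -/
lemma commute_diag_comp {N : Type*} [Fintype N] [DecidableEq N]
    (B : Matrix N N ℂ) (d : N → ℝ) (f : ℝ → ℝ)
    (h : B * diagonal ((↑) ∘ d) = diagonal ((↑) ∘ d) * B) :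
    B * diagonal ((↑) ∘ f ∘ d) = diagonal ((↑) ∘ f ∘ d) * B := by
  ext i j
  have h' : B i j * (d j : ℂ) = (d i : ℂ) * B i j := by
    have := congrFun (congrFun h i) j
    simpa [mul_diagonal, diagonal_mul] using this
  simp only [mul_diagonal, diagonal_mul, Function.comp]
  rcases eq_or_ne (d i) (d j) with he | he
  · rw [he, mul_comm]
  · have hB : B i j = 0 := by
      by_contra hB
      apply he
      have h0 : B i j * ((d j : ℂ) - (d i : ℂ)) = 0 := by
        rw [mul_sub, h', mul_comm (B i j) ((d i : ℂ)), sub_self]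
      rcases mul_eq_zero.mp h0 with h0 | h0
      · exact absurd h0 hB
      · exact (by exact_mod_cast (sub_eq_zero.mp h0).symm : d i = d j)
    simp [hB]

/-- A matrix commuting with a positive semidefinite matrix commutes with its square root. -/
lemma commute_psd_sqrt {N : Type*} [Fintype N] [DecidableEq N]
    {A B : Matrix N N ℂ} (hA : A.PosSemidef)
    (h : B * A = A * B) : B * hA.sqrt = hA.sqrt * B := by
  set U : Matrix N N ℂ := hA.1.eigenvectorUnitary.1 with hUdef
  have hU1 : U * star U = 1 := (Matrix.mem_unitaryGroup_iff).mp hA.1.eigenvectorUnitary.2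
  have hU2 : star U * U = 1 := (Matrix.mem_unitaryGroup_iff').mp hA.1.eigenvectorUnitary.2
  set D : Matrix N N ℂ := diagonal ((↑) ∘ hA.1.eigenvalues) with hDdef
  have hspec : A = U * D * star U := by
    have := hA.1.spectral_theorem; rw [Unitary.conjStarAlgAut_apply] at this; exact this
  set B' : Matrix N N ℂ := star U * B * U with hB'def
  have hUD : U * D = A * U := by
    rw [hspec, mul_assoc, mul_assoc, hU2, mul_one]
  have hDU : D * star U = star U * A := by
    rw [hspec, ← mul_assoc, ← mul_assoc, hU2, one_mul]
  have hBU : B * U = U * B' := by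
    rw [hB'def, ← mul_assoc, ← mul_assoc, hU1, one_mul]
  have hUB : B' * star U = star U * B := by
    rw [hB'def, mul_assoc, mul_assoc, hU1, mul_one]
  have hBD : B' * D = D * B' := by
    calc B' * D = star U * B * (U * D) := by rw [mul_assoc]
      _ = star U * B * (A * U) := by rw [hUD]
      _ = star U * (B * A) * U := by simp only [mul_assoc]
      _ = star U * (A * B) * U := by rw [h]
      _ = (star U * A) * (B * U) := by simp only [mul_assoc]
      _ = (D * star U) * (U * B') := by rw [hDU, hBU]
      _ = D * (star U * U) * B' := by simp only [mul_assoc]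
      _ = D * B' := by rw [hU2, mul_one]
  have hBD' : B' * diagonal ((↑) ∘ Real.sqrt ∘ hA.1.eigenvalues)
      = diagonal ((↑) ∘ Real.sqrt ∘ hA.1.eigenvalues) * B' := by
    have := commute_diag_comp B' hA.1.eigenvalues Real.sqrt (by rwa [← hDdef])
    simpa [Function.comp] using this
  show B * (U * diagonal ((↑) ∘ Real.sqrt ∘ hA.1.eigenvalues) * star U)
      = (U * diagonal ((↑) ∘ Real.sqrt ∘ hA.1.eigenvalues) * star U) * B
  set D' : Matrix N N ℂ := diagonal ((↑) ∘ Real.sqrt ∘ hA.1.eigenvalues)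
  calc B * (U * D' * star U) = (B * U) * D' * star U := by simp only [mul_assoc]
    _ = U * (B' * D') * star U := by rw [hBU]; simp only [mul_assoc]
    _ = U * (D' * B') * star U := by rw [hBD']
    _ = U * D' * (B' * star U) := by simp only [mul_assoc]
    _ = U * D' * star U * B := by rw [hUB]; simp only [mul_assoc]

/-- If `c` commutes with all `V_rᴴ V_s`, the canonical recovery map
`R(c) = Φ*(1)^{-1/2} Φ*(c) Φ*(1)^{-1/2}` satisfies the recovery equation
`R(c) V_r = V_r c`, and hence `Φ(R(c)) = c`. -/
theorem recovery_map_satisfies_recovery_equation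
    {n m k : ℕ} (V : Fin k → Matrix (Fin n) (Fin m) ℂ)
    (hV : ∑ r, (V r)ᴴ * V r = 1)
    (hT : (∑ r, V r * (V r)ᴴ).PosDef)
    (c : Matrix (Fin m) (Fin m) ℂ)
    (hc : ∀ r s, c * ((V r)ᴴ * V s) = ((V r)ᴴ * V s) * c) :
    (∀ r, ((hT.posSemidef.sqrt)⁻¹ * (∑ s, V s * c * (V s)ᴴ) * (hT.posSemidef.sqrt)⁻¹)
        * V r = V r * c) ∧
    (∑ r, (V r)ᴴ *
        ((hT.posSemidef.sqrt)⁻¹ * (∑ s, V s * c * (V s)ᴴ) * (hT.posSemidef.sqrt)⁻¹)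
        * V r) = c := by
  set T : Matrix (Fin n) (Fin n) ℂ := ∑ r, V r * (V r)ᴴ with hTdef
  set S : Matrix (Fin n) (Fin n) ℂ := hT.posSemidef.sqrt with hSdef
  set Φc : Matrix (Fin n) (Fin n) ℂ := ∑ s, V s * c * (V s)ᴴ with hΦdef
  have hS2 : S * S = T := psd_sqrt_mul_self hT.posSemidef
  have hdet : IsUnit S.det := by
    have hTu : IsUnit T.det := (Matrix.isUnit_iff_isUnit_det T).mp hT.isUnit
    have : S.det * S.det = T.det := by rw [← det_mul, hS2]
    exact isUnit_of_mul_isUnit_left (this ▸ hTu)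
  have hSi1 : S⁻¹ * S = 1 := nonsing_inv_mul S hdet
  have hSi2 : S * S⁻¹ = 1 := mul_nonsing_inv S hdet
  have hcT : Φc * T = T * Φc := by
    rw [hΦdef, hTdef, Finset.sum_mul_sum, Finset.sum_mul_sum]
    refine Finset.sum_congr rfl fun s _ => Finset.sum_congr rfl fun r _ => ?_
    calc V s * c * (V s)ᴴ * (V r * (V r)ᴴ)
        = V s * (c * ((V s)ᴴ * V r)) * (V r)ᴴ := by simp only [Matrix.mul_assoc]
      _ = V s * (((V s)ᴴ * V r) * c) * (V r)ᴴ := by rw [hc s r]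
      _ = V s * (V s)ᴴ * (V r * c * (V r)ᴴ) := by simp only [Matrix.mul_assoc]
  have hcS : Φc * S = S * Φc := commute_psd_sqrt hT.posSemidef hcT
  have hcSi : Φc * S⁻¹ = S⁻¹ * Φc := by
    calc Φc * S⁻¹ = S⁻¹ * (S * Φc) * S⁻¹ := by
          rw [← mul_assoc, hSi1, Matrix.one_mul]
      _ = S⁻¹ * (Φc * S) * S⁻¹ := by rw [hcS]
      _ = S⁻¹ * Φc := by rw [mul_assoc, mul_assoc, hSi2, mul_one]
  have hkey : ∀ r, Φc * V r = T * (V r * c) := fun r => by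
    rw [hΦdef, hTdef, Matrix.sum_mul, Matrix.sum_mul]
    refine Finset.sum_congr rfl fun s _ => ?_
    calc V s * c * (V s)ᴴ * V r = V s * (c * ((V s)ᴴ * V r)) := by simp only [Matrix.mul_assoc]
      _ = V s * (((V s)ᴴ * V r) * c) := by rw [hc s r]
      _ = V s * (V s)ᴴ * (V r * c) := by simp only [Matrix.mul_assoc]
  have hrec : ∀ r, (S⁻¹ * Φc * S⁻¹) * V r = V r * c := fun r => by
    calc S⁻¹ * Φc * S⁻¹ * V r = S⁻¹ * (Φc * S⁻¹) * V r := by rw [mul_assoc S⁻¹ Φc]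
      _ = S⁻¹ * (S⁻¹ * Φc) * V r := by rw [hcSi]
      _ = S⁻¹ * (S⁻¹ * (Φc * V r)) := by simp only [Matrix.mul_assoc]
      _ = S⁻¹ * (S⁻¹ * (S * S * (V r * c))) := by rw [hkey r, hS2]
      _ = S⁻¹ * (S⁻¹ * S * (S * (V r * c))) := by simp only [Matrix.mul_assoc]
      _ = S⁻¹ * (S * (V r * c)) := by rw [hSi1, Matrix.one_mul]
      _ = S⁻¹ * S * (V r * c) := by rw [Matrix.mul_assoc]
      _ = V r * c := by rw [hSi1, Matrix.one_mul]
  refine ⟨hrec, ?_⟩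
  calc (∑ r, (V r)ᴴ * (S⁻¹ * Φc * S⁻¹) * V r)
      = ∑ r, (V r)ᴴ * V r * c := by
        refine Finset.sum_congr rfl fun r _ => ?_
        rw [Matrix.mul_assoc ((V r)ᴴ) _ (V r), hrec r, ← Matrix.mul_assoc]
    _ = (∑ r, (V r)ᴴ * V r) * c := by rw [Matrix.sum_mul]
    _ = c := by rw [hV, Matrix.one_mul]
end
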